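/- arXiv:1303.4238 — 2 statements merged into one kernel-verified Lean document; each statement's English description precedes it below -/
import Mathlib

section
/- Let Y be a nonzero subgroup of ℚ such that pY ≠ Y for every prime p. Then the only automorphisms of the additive group Y are the identity map y ↦ y and the inversion y ↦ −y. (Dually, if X is an a-adic solenoid on which no map x ↦ px, p prime, is a topological automorphism, then Aut(X) = {I, −I}.) -/
/-- Let `Y` be a nonzero subgroup of `ℚ` such that `pY ≠ Y` for every prime `p`.
Then the only automorphisms of the group `Y` are the identity `y ↦ y` and the
inversion `y ↦ −y` (dually, `Aut(Σ_a) = {I, −I}` for the corresponding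
`a`-adic solenoid). -/
theorem aut_eq_pm_id_of_no_prime_divisibility
    (Y : AddSubgroup ℚ) (hY : Y ≠ ⊥)
    (hprime : ∀ p : ℕ, p.Prime → Y.map (AddMonoidHom.mulLeft (p : ℚ)) ≠ Y)
    (e : ↥Y ≃+ ↥Y) :
    (∀ y : ↥Y, e y = y) ∨ (∀ y : ↥Y, e y = -y) := by
  -- pick a nonzero element y0 of Y
  obtain ⟨y0, hy0⟩ : ∃ y0 : ↥Y, (y0 : ℚ) ≠ 0 := by
    by_contra h
    push_neg at h
    apply hY
    ext x
    simp only [AddSubgroup.mem_bot]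
    constructor
    · intro hx; exact_mod_cast h ⟨x, hx⟩
    · rintro rfl; exact Y.zero_mem
  have hey0 : (e y0 : ℚ) ≠ 0 := by
    intro h
    have h1 : e y0 = 0 := Subtype.ext h
    have h2 : y0 = 0 := by apply e.injective; simpa using h1
    exact hy0 (by simpa using congrArg Subtype.val h2)
  -- e is multiplication by a nonzero rational q
  obtain ⟨q, hq0, hmul⟩ : ∃ q : ℚ, q ≠ 0 ∧ ∀ y : ↥Y, (e y : ℚ) = q * (y : ℚ) := by
    refine ⟨(e y0 : ℚ) / (y0 : ℚ), div_ne_zero hey0 hy0, ?_⟩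
    intro y
    rw [div_mul_eq_mul_div, eq_div_iff hy0]
    -- cross-ratio identity: e y * y0 = e y0 * y
    have h1 : (y : ℚ) * (y : ℚ).den = (y : ℚ).num := Rat.mul_den_eq_num _
    have h2 : (y0 : ℚ) * (y0 : ℚ).den = (y0 : ℚ).num := Rat.mul_den_eq_num _
    have key : (((y : ℚ).den * (y0 : ℚ).num : ℤ)) • y
        = (((y0 : ℚ).den * (y : ℚ).num : ℤ)) • y0 := by
      apply Subtype.ext
      push_cast
      rw [zsmul_eq_mul, zsmul_eq_mul]
      push_cast
      linear_combination ((y0 : ℚ).num : ℚ) * h1 - ((y : ℚ).num : ℚ) * h2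
    have key2 := congrArg (Subtype.val) (congrArg e key)
    rw [map_zsmul, map_zsmul] at key2
    push_cast at key2
    rw [zsmul_eq_mul, zsmul_eq_mul] at key2
    push_cast at key2
    have hb : ((y : ℚ).den : ℚ) ≠ 0 := by positivity
    have hb0 : ((y0 : ℚ).den : ℚ) ≠ 0 := by positivity
    have ha0 : ((y0 : ℚ).num : ℚ) ≠ 0 := by
      simpa [Rat.num_eq_zero] using hy0
    have hne : ((y : ℚ).den : ℚ) * ((y0 : ℚ).num : ℚ) * ((y0 : ℚ).den : ℚ) ≠ 0 :=
      mul_ne_zero (mul_ne_zero hb ha0) hb0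
    apply mul_left_cancel₀ hne
    linear_combination (((y0 : ℚ).den : ℚ) * (y0 : ℚ)) * key2
      - (((y0 : ℚ).den : ℚ) * ((y0 : ℚ).num : ℚ) * (e y0 : ℚ)) * h1
      + (((y : ℚ).num : ℚ) * ((y0 : ℚ).den : ℚ) * (e y0 : ℚ)) * h2
  -- q maps Y into Y and onto Y
  have hforward : ∀ x ∈ Y, q * x ∈ Y := by
    intro x hx
    have := (e ⟨x, hx⟩).2
    rwa [show ((e ⟨x, hx⟩ : ℚ)) = q * x from hmul ⟨x, hx⟩] at this
  have hsurj : ∀ x ∈ Y, ∃ z ∈ Y, q * z = x := by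
    intro x hx
    refine ⟨(e.symm ⟨x, hx⟩ : ℚ), (e.symm ⟨x, hx⟩).2, ?_⟩
    have := hmul (e.symm ⟨x, hx⟩)
    rw [e.apply_symm_apply] at this
    exact this.symm
  have hqeq : q = (q.num : ℚ) / (q.den : ℚ) := (Rat.num_div_den q).symm
  have hd : ((q.den : ℕ) : ℚ) ≠ 0 := by positivity
  -- Bezout-type lemma: if x ∈ Y and q * x ∈ Y then x / q.den ∈ Y
  have hbez : ∀ x ∈ Y, q * x ∈ Y → x / (q.den : ℚ) ∈ Y := by
    intro x hx hqx
    obtain ⟨u, v, huv⟩ : ∃ u v : ℤ, u * q.num + v * (q.den : ℤ) = 1 := by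
      have hcop : Int.gcd q.num q.den = 1 := q.reduced
      refine ⟨Int.gcdA q.num q.den, Int.gcdB q.num q.den, ?_⟩
      have h := Int.gcd_eq_gcd_ab q.num (q.den : ℤ)
      rw [hcop] at h
      push_cast at h
      linarith [h]
    have hu : (u : ℚ) * (q.num : ℚ) + (v : ℚ) * ((q.den : ℕ) : ℚ) = 1 := by
      exact_mod_cast congrArg (fun n : ℤ => (n : ℚ)) huv
    have hnd : q * ((q.den : ℕ) : ℚ) = (q.num : ℚ) := Rat.mul_den_eq_num q
    have hkey : x / ((q.den : ℕ) : ℚ) = u • (q * x) + v • x := by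
      rw [zsmul_eq_mul, zsmul_eq_mul, div_eq_iff hd]
      linear_combination (-x) * hu - ((u : ℚ) * x) * hnd
    rw [hkey]
    exact Y.add_mem (Y.zsmul_mem hqx u) (Y.zsmul_mem hx v)
  -- If a prime p divides q.num or q.den, then pY = Y, contradiction
  have hmapY : ∀ p : ℕ, p.Prime → ((p : ℤ) ∣ q.num ∨ p ∣ q.den) → False := by
    intro p hp hdvd
    have hp0 : (p : ℚ) ≠ 0 := by exact_mod_cast hp.ne_zero
    apply hprime p hp
    apply le_antisymm
    · rintro _ ⟨x, hx, rfl⟩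
      simp only [AddMonoidHom.coe_mulLeft]
      have h : (p : ℚ) * x = (p : ℤ) • x := by push_cast [zsmul_eq_mul]; ring
      rw [h]
      exact Y.zsmul_mem hx _
    · intro x hx
      rcases hdvd with ⟨c, hc⟩ | ⟨c, hc⟩
      · -- p ∣ q.num
        obtain ⟨z, hz, hqz⟩ := hsurj x hx
        have hw : z / (q.den : ℚ) ∈ Y := hbez z hz (by rw [hqz]; exact hx)
        refine ⟨c • (z / (q.den : ℚ)), Y.zsmul_mem hw c, ?_⟩
        simp only [AddMonoidHom.coe_mulLeft]
        rw [zsmul_eq_mul]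
        have hnd : q * ((q.den : ℕ) : ℚ) = (q.num : ℚ) := Rat.mul_den_eq_num q
        have hcQ : (q.num : ℚ) = (p : ℚ) * (c : ℚ) := by exact_mod_cast congrArg (fun n : ℤ => (n : ℚ)) hc
        rw [show (p : ℚ) * ((c : ℚ) * (z / ((q.den : ℕ) : ℚ)))
            = ((p : ℚ) * (c : ℚ)) * z / ((q.den : ℕ) : ℚ) from by ring, div_eq_iff hd]
        linear_combination (-z) * hcQ - z * hnd + ((q.den : ℚ)) * hqz
      · -- p ∣ q.den
        have hw : x / (q.den : ℚ) ∈ Y := hbez x hx (hforward x hx)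
        refine ⟨(c : ℤ) • (x / (q.den : ℚ)), Y.zsmul_mem hw _, ?_⟩
        simp only [AddMonoidHom.coe_mulLeft]
        have hden : ((q.den : ℕ) : ℚ) = (p : ℚ) * (c : ℚ) := by exact_mod_cast congrArg (fun n : ℕ => (n : ℚ)) hc
        have hc0 : (c : ℚ) ≠ 0 := by
          intro h0
          apply hd
          rw [hden, h0, mul_zero]
        rw [zsmul_eq_mul]
        push_cast
        rw [show (p : ℚ) * ((c : ℚ) * (x / ((q.den : ℕ) : ℚ)))
            = ((p : ℚ) * (c : ℚ)) * x / ((q.den : ℕ) : ℚ) from by ring, div_eq_iff hd]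
        linear_combination (-x) * hden
  -- Hence q.den = 1 and |q.num| = 1, so q = ±1
  have hden1 : q.den = 1 := by
    by_contra h
    obtain ⟨p, hp, hpd⟩ := Nat.exists_prime_and_dvd h
    exact hmapY p hp (Or.inr hpd)
  have hnum : q.num = 1 ∨ q.num = -1 := by
    have hna : q.num.natAbs = 1 := by
      by_contra h
      obtain ⟨p, hp, hpd⟩ := Nat.exists_prime_and_dvd h
      exact hmapY p hp
        (Or.inl ((Int.natCast_dvd_natCast.mpr hpd).trans (Int.natAbs_dvd.mpr dvd_rfl)))
    rcases Int.natAbs_eq q.num with h | h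
    · left; rw [h, hna]; rfl
    · right; rw [h, hna]; rfl
  have hq1 : q = 1 ∨ q = -1 := by
    rcases hnum with h | h
    · left; rw [hqeq, h, hden1]; norm_num
    · right; rw [hqeq, h, hden1]; norm_num
  rcases hq1 with h | h
  · left
    intro y
    apply Subtype.ext
    rw [hmul y, h, one_mul]
  · right
    intro y
    apply Subtype.ext
    rw [hmul y, h]
    push_cast
    ring
end

section
/- Let Y be a subgroup of ℚ and let f_1, f_2, f_3 be normalized positive definite functions on Y satisfying equation (S-D T): f_1(u_1+u_2+u_3)·f_2(u_1−u_2−u_3)·f_3(u_1+u_2−u_3) = f_1(u_1)f_1(u_2)f_1(u_3)·f_2(u_1)f_2(−u_2)f_2(−u_3)·f_3(u_1)f_3(u_2)f_3(−u_3) for all u_1, u_2, u_3 ∈ Y. Suppose that for every y ∈ Y with y ≠ 0 at least one of f_1(y), f_2(y), f_3(y) is zero (i.e. N = {y : f_1(y)f_2(y)f_3(y) ≠ 0} = {0}). Then f_i(2y) = 0 for every y ∈ Y with y ≠ 0 and every i = 1, 2, 3. -/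
/-- `f : Y → ℂ` is a positive definite function on the abelian group `Y`. -/
def IsPosDefFn {Y : Type*} [AddCommGroup Y] (f : Y → ℂ) : Prop :=
  ∀ (n : ℕ) (y : Fin n → Y) (c : Fin n → ℂ),
    0 ≤ (∑ i, ∑ j, f (y i - y j) * c i * (starRingEnd ℂ) (c j)).re ∧
    (∑ i, ∑ j, f (y i - y j) * c i * (starRingEnd ℂ) (c j)).im = 0

/-- Equation (S-D T) for functions `f₁, f₂, f₃` on an abelian group. -/
def SDTEq {Y : Type*} [AddCommGroup Y] (f₁ f₂ f₃ : Y → ℂ) : Prop :=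
  ∀ u₁ u₂ u₃ : Y,
    f₁ (u₁ + u₂ + u₃) * f₂ (u₁ - u₂ - u₃) * f₃ (u₁ + u₂ - u₃) =
      f₁ u₁ * f₁ u₂ * f₁ u₃ * (f₂ u₁ * f₂ (-u₂) * f₂ (-u₃)) *
        (f₃ u₁ * f₃ u₂ * f₃ (-u₃))

/-- Let `Y` be a subgroup of `ℚ` and `f₁, f₂, f₃` normalized positive definite
functions on `Y` satisfying (S-D T). If for every nonzero `y` at least one of
`f₁(y), f₂(y), f₃(y)` vanishes (i.e. `N = {0}`), then `fᵢ(2y) = 0` for every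
nonzero `y` and every `i = 1, 2, 3`. -/
theorem SDT_vanish_on_doubles_of_N_eq_zero
    (Y : AddSubgroup ℚ)
    (f₁ f₂ f₃ : ↥Y → ℂ)
    (hpd₁ : IsPosDefFn f₁) (hpd₂ : IsPosDefFn f₂) (hpd₃ : IsPosDefFn f₃)
    (hn₁ : f₁ 0 = 1) (hn₂ : f₂ 0 = 1) (hn₃ : f₃ 0 = 1)
    (heq : SDTEq f₁ f₂ f₃)
    (hN : ∀ y : ↥Y, y ≠ 0 → f₁ y * f₂ y * f₃ y = 0) :
    ∀ y : ↥Y, y ≠ 0 → f₁ (2 • y) = 0 ∧ f₂ (2 • y) = 0 ∧ f₃ (2 • y) = 0 := by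
  intro y hy
  have h := hN y hy
  have e1 := heq y 0 y
  have e2 := heq y (-y) 0
  have e3 := heq 0 y (-y)
  simp only [add_zero, sub_zero, zero_add, zero_sub, sub_neg_eq_add, add_neg_cancel,
    neg_add_cancel, neg_zero, neg_neg, sub_self, hn₁, hn₂, hn₃, mul_one, one_mul] at e1 e2 e3
  rw [two_smul]
  refine ⟨?_, ?_, ?_⟩
  · rw [e1]
    rcases mul_eq_zero.mp h with h' | h'
    · rcases mul_eq_zero.mp h' with h'' | h'' <;> rw [h''] <;> ring
    · rw [h']; ring
  · rw [e2]
    rcases mul_eq_zero.mp h with h' | h'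
    · rcases mul_eq_zero.mp h' with h'' | h'' <;> rw [h''] <;> ring
    · rw [h']; ring
  · rw [e3]
    rcases mul_eq_zero.mp h with h' | h'
    · rcases mul_eq_zero.mp h' with h'' | h'' <;> rw [h''] <;> ring
    · rw [h']; ring
end
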